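/- Let A and B be Hopf algebras with a skew Hopf pairing φ: A × B → k. Then the Schrödinger representation of the quantum double D_φ(A,B) on A, given by (a⊗1)·x = ∑ a₍₁₎ x S(a₍₂₎) and (1⊗b)·x = ∑ φ(x₍₁₎, S(b)) x₍₂₎, makes A a D_φ(A,B)-module algebra: the action satisfies d·(xy) = ∑ (d₍₁₎·x)(d₍₂₎·y) and d·1 = ε(d)1 for all d ∈ D_φ(A,B), x, y ∈ A. -/

import Mathlib

open TensorProduct Coalgebra

variable (k : Type*) [Field k]
variable (A : Type*) [Ring A] [HopfAlgebra k A]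
variable (B : Type*) [Ring B] [HopfAlgebra k B]

section ConvolutionAux
section Conv
variable {K : Type*} [CommSemiring K]
variable {H : Type*} [Semiring H] [HopfAlgebra K H]
variable {C : Type*} [Semiring C] [Algebra K C]

noncomputable def conv (f g : H →ₗ[K] C) : H →ₗ[K] C :=
  LinearMap.mul' K C ∘ₗ TensorProduct.map f g ∘ₗ Coalgebra.comul

lemma conv_apply (f g : H →ₗ[K] C) (a : H) {ι : Type*} (r : Coalgebra.Repr K a ι) :
    conv f g a = ∑ i ∈ r.index, f (r.left i) * g (r.right i) := by
  simp [conv, ← r.eq, map_sum]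

lemma sum_counit_smul {a : H} {ι : Type*} (r : Coalgebra.Repr K a ι) :
    ∑ i ∈ r.index, Coalgebra.counit (R := K) (r.left i) • r.right i = a := by
  have h := Coalgebra.sum_counit_tmul_eq r
  have := congrArg (TensorProduct.lid K H) h
  simpa only [map_sum, TensorProduct.lid_tmul, one_smul] using this

lemma sum_smul_counit {a : H} {ι : Type*} (r : Coalgebra.Repr K a ι) :
    ∑ i ∈ r.index, Coalgebra.counit (R := K) (r.right i) • r.left i = a := by
  have h := Coalgebra.sum_tmul_counit_eq r
  have := congrArg (TensorProduct.rid K H) h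
  simpa only [map_sum, TensorProduct.rid_tmul, one_smul] using this


noncomputable def cunit : H →ₗ[K] C := Algebra.linearMap K C ∘ₗ Coalgebra.counit

lemma cunit_apply (a : H) : (cunit : H →ₗ[K] C) a = algebraMap K C (Coalgebra.counit (R := K) a) := rfl

lemma conv_assoc (f g h : H →ₗ[K] C) : conv (conv f g) h = conv f (conv g h) := by
  apply LinearMap.ext; intro a
  set r : Coalgebra.Repr K a (H × H) := ℛ K a with hr
  set r₁ : (i : r.ι) → Coalgebra.Repr K (r.left i) (H × H) := fun i => ℛ K (r.left i) with hr₁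
  set r₂ : (i : r.ι) → Coalgebra.Repr K (r.right i) (H × H) := fun i => ℛ K (r.right i) with hr₂
  have key := Coalgebra.sum_map_tmul_tmul_eq (R := K) f g h a (repr := r) (a₁ := r₁) (a₂ := r₂)
  have key2 := congrArg (LinearMap.mul' K C ∘ₗ LinearMap.lTensor C (LinearMap.mul' K C)) key
  simp only [map_sum, LinearMap.comp_apply, LinearMap.lTensor_tmul, LinearMap.mul'_apply] at key2
  rw [conv_apply _ _ _ r, conv_apply _ _ _ r]
  calc ∑ i ∈ r.index, conv f g (r.left i) * h (r.right i)
      = ∑ i ∈ r.index, ∑ j ∈ (r₁ i).index,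
          f ((r₁ i).left j) * (g ((r₁ i).right j) * h (r.right i)) := by
        refine Finset.sum_congr rfl fun i _ => ?_
        rw [conv_apply _ _ _ (r₁ i), Finset.sum_mul]
        exact Finset.sum_congr rfl fun j _ => mul_assoc _ _ _
    _ = ∑ i ∈ r.index, ∑ j ∈ (r₂ i).index,
          f (r.left i) * (g ((r₂ i).left j) * h ((r₂ i).right j)) := key2.symm
    _ = ∑ i ∈ r.index, f (r.left i) * conv g h (r.right i) := by
        refine Finset.sum_congr rfl fun i _ => ?_
        rw [conv_apply _ _ _ (r₂ i), Finset.mul_sum]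

lemma conv_cunit_left (f : H →ₗ[K] C) : conv cunit f = f := by
  apply LinearMap.ext; intro a
  rw [conv_apply _ _ _ (ℛ K a)]
  calc ∑ i ∈ (ℛ K a).index, cunit ((ℛ K a).left i) * f ((ℛ K a).right i)
      = ∑ i ∈ (ℛ K a).index, Coalgebra.counit (R := K) ((ℛ K a).left i) • f ((ℛ K a).right i) := by
        refine Finset.sum_congr rfl fun i _ => ?_
        rw [cunit_apply, Algebra.smul_def]
    _ = f a := by
        simp_rw [← map_smul f, ← map_sum f]
        rw [_root_.sum_counit_smul]

lemma conv_cunit_right (f : H →ₗ[K] C) : conv f cunit = f := by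
  apply LinearMap.ext; intro a
  rw [conv_apply _ _ _ (ℛ K a)]
  calc ∑ i ∈ (ℛ K a).index, f ((ℛ K a).left i) * cunit ((ℛ K a).right i)
      = ∑ i ∈ (ℛ K a).index, Coalgebra.counit (R := K) ((ℛ K a).right i) • f ((ℛ K a).left i) := by
        refine Finset.sum_congr rfl fun i _ => ?_
        rw [cunit_apply, ← Algebra.commutes, ← Algebra.smul_def]
    _ = f a := by
        simp_rw [← map_smul f, ← map_sum f]
        rw [sum_smul_counit]


lemma conv_antipode_id :
    conv (HopfAlgebra.antipode (R := K) (A := H)) (LinearMap.id) = (cunit : H →ₗ[K] H) := by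
  apply LinearMap.ext; intro a
  have h := HopfAlgebra.mul_antipode_rTensor_comul_apply (R := K) (a := a)
  simpa [conv, cunit, LinearMap.rTensor] using h

lemma conv_id_antipode :
    conv (LinearMap.id) (HopfAlgebra.antipode (R := K) (A := H)) = (cunit : H →ₗ[K] H) := by
  apply LinearMap.ext; intro a
  have h := HopfAlgebra.mul_antipode_lTensor_comul_apply (R := K) (a := a)
  simpa [conv, cunit, LinearMap.lTensor] using h

variable {D : Type*} [Semiring D] [Algebra K D]

lemma algHom_conv (θ : C →ₐ[K] D) (f g : H →ₗ[K] C) :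
    conv (θ.toLinearMap ∘ₗ f) (θ.toLinearMap ∘ₗ g) = θ.toLinearMap ∘ₗ conv f g := by
  apply LinearMap.ext; intro a
  rw [conv_apply _ _ _ (ℛ K a)]
  simp only [LinearMap.comp_apply]
  rw [conv_apply _ _ _ (ℛ K a), map_sum]
  exact Finset.sum_congr rfl fun i _ => (θ.map_mul _ _).symm

lemma algHom_cunit (θ : C →ₐ[K] D) : θ.toLinearMap ∘ₗ (cunit : H →ₗ[K] C) = cunit := by
  apply LinearMap.ext; intro a
  simp [cunit_apply, AlgHom.commutes]

lemma conv_inv_unique {f g h : H →ₗ[K] C} (h1 : conv f g = cunit) (h2 : conv g h = cunit) :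
    f = h := by
  have : conv f (conv g h) = conv (conv f g) h := (conv_assoc f g h).symm
  rw [h1, h2, conv_cunit_right, conv_cunit_left] at this
  exact this

lemma counit_antipode :
    (Coalgebra.counit : H →ₗ[K] K) ∘ₗ HopfAlgebra.antipode (R := K) (A := H) =
      Coalgebra.counit := by
  have h1 := algHom_conv (H := H) (Bialgebra.counitAlgHom K H)
      (HopfAlgebra.antipode (R := K) (A := H)) (LinearMap.id)
  rw [conv_antipode_id, algHom_cunit] at h1
  have h2 : (Bialgebra.counitAlgHom K H).toLinearMap ∘ₗ LinearMap.id
      = (Coalgebra.counit : H →ₗ[K] K) := rfl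
  have h3 : (cunit : H →ₗ[K] K) = Coalgebra.counit := by
    apply LinearMap.ext; intro a; simp [cunit_apply, Algebra.algebraMap_self_apply]
  have h5 : (Bialgebra.counitAlgHom K H).toLinearMap = (Coalgebra.counit : H →ₗ[K] K) := rfl
  rw [h2, h5] at h1
  have h4 : conv ((Coalgebra.counit : H →ₗ[K] K) ∘ₗ HopfAlgebra.antipode (R := K) (A := H))
      (Coalgebra.counit : H →ₗ[K] K) =
      (Coalgebra.counit : H →ₗ[K] K) ∘ₗ HopfAlgebra.antipode (R := K) (A := H) := by
    rw [← h3, conv_cunit_right]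
  rw [← h4, h1]
  exact h3

lemma comul_antipode :
    (Coalgebra.comul : H →ₗ[K] H ⊗[K] H) ∘ₗ HopfAlgebra.antipode (R := K) (A := H) =
      (TensorProduct.comm K H H).toLinearMap ∘ₗ
        TensorProduct.map (HopfAlgebra.antipode (R := K) (A := H))
          (HopfAlgebra.antipode (R := K) (A := H)) ∘ₗ Coalgebra.comul := by
  set S := HopfAlgebra.antipode (R := K) (A := H)
  set l := (Algebra.TensorProduct.includeLeft : H →ₐ[K] H ⊗[K] H).toLinearMap
  set r := (Algebra.TensorProduct.includeRight : H →ₐ[K] H ⊗[K] H).toLinearMap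
  set G := (TensorProduct.comm K H H).toLinearMap ∘ₗ TensorProduct.map S S ∘ₗ
    (Coalgebra.comul : H →ₗ[K] H ⊗[K] H)
  set Δ := (Coalgebra.comul : H →ₗ[K] H ⊗[K] H)
  have hΔ : Δ = conv l r := by
    apply LinearMap.ext; intro a
    rw [conv_apply _ _ _ (ℛ K a)]
    calc Δ a = ∑ i ∈ (ℛ K a).index, (ℛ K a).left i ⊗ₜ[K] (ℛ K a).right i := ((ℛ K a).eq).symm
      _ = _ := Finset.sum_congr rfl fun i _ => by
          simp [l, r, Algebra.TensorProduct.tmul_mul_tmul]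
  have hG : G = conv (r ∘ₗ S) (l ∘ₗ S) := by
    apply LinearMap.ext; intro a
    rw [conv_apply _ _ _ (ℛ K a)]
    have : G a = ∑ i ∈ (ℛ K a).index, S ((ℛ K a).right i) ⊗ₜ[K] S ((ℛ K a).left i) := by
      simp only [G, LinearMap.comp_apply, ← (ℛ K a).eq, map_sum]
      exact Finset.sum_congr rfl fun i _ => by simp
    rw [this]
    exact Finset.sum_congr rfl fun i _ => by
      simp [l, r, Algebra.TensorProduct.tmul_mul_tmul]
  have step1 : conv (Δ ∘ₗ S) Δ = cunit := by
    have := algHom_conv (H := H) (Bialgebra.comulAlgHom K H) S LinearMap.id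
    rw [conv_antipode_id, algHom_cunit] at this
    have h2 : (Bialgebra.comulAlgHom K H).toLinearMap ∘ₗ S = Δ ∘ₗ S := rfl
    have h3 : (Bialgebra.comulAlgHom K H).toLinearMap ∘ₗ LinearMap.id = Δ := rfl
    rwa [h2, h3] at this
  have hrr : conv r (r ∘ₗ S) = cunit := by
    have := algHom_conv (H := H) (Algebra.TensorProduct.includeRight : H →ₐ[K] H ⊗[K] H)
      LinearMap.id S
    rw [conv_id_antipode, algHom_cunit] at this
    have h2 : (Algebra.TensorProduct.includeRight : H →ₐ[K] H ⊗[K] H).toLinearMap ∘ₗ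
      LinearMap.id = r := rfl
    rwa [h2] at this
  have hll : conv l (l ∘ₗ S) = cunit := by
    have := algHom_conv (H := H) (Algebra.TensorProduct.includeLeft : H →ₐ[K] H ⊗[K] H)
      LinearMap.id S
    rw [conv_id_antipode, algHom_cunit] at this
    have h2 : (Algebra.TensorProduct.includeLeft : H →ₐ[K] H ⊗[K] H).toLinearMap ∘ₗ
      LinearMap.id = l := rfl
    rwa [h2] at this
  have step2 : conv Δ G = cunit := by
    rw [hΔ, hG, conv_assoc, ← conv_assoc r (r ∘ₗ S) (l ∘ₗ S), hrr, conv_cunit_left, hll]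
  exact conv_inv_unique step1 step2

end Conv

end ConvolutionAux

/-- The adjoint action `A ⊗ A → A`, `a ⊗ x ↦ ∑ a₍₁₎ x S(a₍₂₎)`. -/
noncomputable def adAct : A ⊗[k] A →ₗ[k] A :=
  (LinearMap.mul' k A) ∘ₗ
    (LinearMap.lTensor A (LinearMap.mul' k A)) ∘ₗ
    (LinearMap.lTensor A
      ((TensorProduct.comm k A A).toLinearMap ∘ₗ
        (LinearMap.rTensor A (HopfAlgebra.antipode (R := k) (A := A))))) ∘ₗ
    (TensorProduct.assoc k A A A).toLinearMap ∘ₗ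
    (LinearMap.rTensor A (Coalgebra.comul (R := k) (A := A)))

/-- The coaction part `B ⊗ A → A`, `b ⊗ x ↦ ∑ φ(x₍₁₎, S(b)) x₍₂₎`. -/
noncomputable def coAct (φ : A ⊗[k] B →ₗ[k] k) : B ⊗[k] A →ₗ[k] A :=
  (TensorProduct.lid k A).toLinearMap ∘ₗ
    (LinearMap.rTensor A φ) ∘ₗ
    (LinearMap.rTensor A
      ((LinearMap.lTensor A (HopfAlgebra.antipode (R := k) (A := B))) ∘ₗ
        (TensorProduct.comm k B A).toLinearMap)) ∘ₗ
    (TensorProduct.assoc k B A A).symm.toLinearMap ∘ₗ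
    (LinearMap.lTensor B (Coalgebra.comul (R := k) (A := A)))

/-- The Schrödinger representation of the quantum double `D_φ(A,B) = A ⊗ B` on `A`:
`(a ⊗ b) ⊗ x ↦ (a ⊗ 1)·((1 ⊗ b)·x) = ∑ φ(x₍₁₎, S(b)) a₍₁₎ x₍₂₎ S(a₍₂₎)`. -/
noncomputable def schrodinger (φ : A ⊗[k] B →ₗ[k] k) : (A ⊗[k] B) ⊗[k] A →ₗ[k] A :=
  (adAct k A) ∘ₗ (LinearMap.lTensor A (coAct k A B φ)) ∘ₗ
    (TensorProduct.assoc k A B A).toLinearMap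

/-- The comultiplication of the quantum double `D_φ(A,B)`, i.e. the tensor product
coalgebra structure on `A ⊗ B`. -/
noncomputable def comulD : A ⊗[k] B →ₗ[k] (A ⊗[k] B) ⊗[k] (A ⊗[k] B) :=
  (TensorProduct.tensorTensorTensorComm k A A B B).toLinearMap ∘ₗ
    (TensorProduct.map (Coalgebra.comul (R := k) (A := A))
      (Coalgebra.comul (R := k) (A := B)))

/-- The counit of the quantum double `D_φ(A,B)`. -/
noncomputable def counitD : A ⊗[k] B →ₗ[k] k :=
  (TensorProduct.lid k k).toLinearMap ∘ₗ
    (TensorProduct.map (Coalgebra.counit (R := k) (A := A))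
      (Coalgebra.counit (R := k) (A := B)))

section AuxLemmas

lemma adAct_tmul (a x : A) {ι : Type*} (r : Coalgebra.Repr k a ι) :
    adAct k A (a ⊗ₜ[k] x) = ∑ i ∈ r.index,
      r.left i * (x * HopfAlgebra.antipode (R := k) (r.right i)) := by
  simp only [adAct, LinearMap.comp_apply, LinearMap.rTensor_tmul, ← r.eq, sum_tmul, map_sum,
    LinearMap.coe_comp, LinearEquiv.coe_coe, Function.comp_apply, assoc_tmul,
    LinearMap.lTensor_tmul, comm_tmul, LinearMap.mul'_apply]

lemma coAct_tmul (φ : A ⊗[k] B →ₗ[k] k) (b : B) (x : A) {ι : Type*} (r : Coalgebra.Repr k x ι) :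
    coAct k A B φ (b ⊗ₜ[k] x) = ∑ i ∈ r.index,
      φ (r.left i ⊗ₜ[k] HopfAlgebra.antipode (R := k) b) • r.right i := by
  simp only [coAct, LinearMap.comp_apply, LinearMap.lTensor_tmul, ← r.eq, tmul_sum, map_sum,
    LinearMap.coe_comp, LinearEquiv.coe_coe, Function.comp_apply, assoc_symm_tmul,
    LinearMap.rTensor_tmul, comm_tmul, lid_tmul]

variable {k A B}

local notation "S" => HopfAlgebra.antipode (R := k) (A := A)
local notation "SB" => HopfAlgebra.antipode (R := k) (A := B)

noncomputable def adL (x : A) : A →ₗ[k] A :=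
  conv (LinearMap.mulRight k x) (HopfAlgebra.antipode (R := k) (A := A))

lemma adAct_tmul_eq_adL (x a : A) : adAct k A (a ⊗ₜ[k] x) = adL (k := k) x a := by
  rw [adAct_tmul k A a x (ℛ k a), adL, conv_apply _ _ _ (ℛ k a)]
  exact Finset.sum_congr rfl fun i _ => by
    rw [LinearMap.mulRight_apply, mul_assoc]

lemma conv_antipode_adL (y : A) :
    conv (HopfAlgebra.antipode (R := k) (A := A)) (adL (k := k) y) =
      LinearMap.mulLeft k y ∘ₗ HopfAlgebra.antipode (R := k) (A := A) := by
  apply LinearMap.ext; intro a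
  set r : Coalgebra.Repr k a (A × A) := ℛ k a with hr
  set r₁ : (i : r.ι) → Coalgebra.Repr k (r.left i) (A × A) := fun i => ℛ k (r.left i) with hr₁
  set r₂ : (i : r.ι) → Coalgebra.Repr k (r.right i) (A × A) := fun i => ℛ k (r.right i) with hr₂
  set N : A ⊗[k] (A ⊗[k] A) →ₗ[k] A :=
    LinearMap.mul' k A ∘ₗ TensorProduct.map (HopfAlgebra.antipode (R := k) (A := A))
      (LinearMap.mul' k A ∘ₗ LinearMap.lTensor A
        (LinearMap.mulLeft k y ∘ₗ HopfAlgebra.antipode (R := k) (A := A))) with hN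
  have key := congrArg N (Coalgebra.sum_tmul_tmul_eq r r₁ r₂)
  simp only [map_sum, hN, LinearMap.comp_apply, TensorProduct.map_tmul,
    LinearMap.lTensor_tmul, LinearMap.mul'_apply, LinearMap.mulLeft_apply] at key
  calc conv (HopfAlgebra.antipode (R := k) (A := A)) (adL (k := k) y) a
      = ∑ i ∈ r.index, S (r.left i) * adL (k := k) y (r.right i) := conv_apply _ _ _ r
    _ = ∑ i ∈ r.index, ∑ j ∈ (r₂ i).index,
        S (r.left i) * ((r₂ i).left j * (y * S ((r₂ i).right j))) := by
        refine Finset.sum_congr rfl fun i _ => ?_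
        rw [adL, conv_apply _ _ _ (r₂ i), Finset.mul_sum]
        exact Finset.sum_congr rfl fun j _ => by
          rw [LinearMap.mulRight_apply, mul_assoc]
    _ = ∑ i ∈ r.index, ∑ j ∈ (r₁ i).index,
        S ((r₁ i).left j) * ((r₁ i).right j * (y * S (r.right i))) := key.symm
    _ = ∑ i ∈ r.index, (∑ j ∈ (r₁ i).index, S ((r₁ i).left j) * (r₁ i).right j) *
          (y * S (r.right i)) := by
        refine Finset.sum_congr rfl fun i _ => ?_
        rw [Finset.sum_mul]
        exact Finset.sum_congr rfl fun j _ => (mul_assoc _ _ _).symm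
    _ = ∑ i ∈ r.index, Coalgebra.counit (R := k) (r.left i) • (y * S (r.right i)) := by
        refine Finset.sum_congr rfl fun i _ => ?_
        rw [HopfAlgebra.sum_antipode_mul_eq_algebraMap_counit (r₁ i), ← Algebra.smul_def]
    _ = y * S a := by
        simp_rw [← mul_smul_comm, ← map_smul (HopfAlgebra.antipode (R := k) (A := A))]
        rw [← Finset.mul_sum, ← map_sum, _root_.sum_counit_smul]
    _ = (LinearMap.mulLeft k y ∘ₗ HopfAlgebra.antipode (R := k) (A := A)) a := rfl

lemma adL_mul (x y : A) : adL (k := k) (x * y) = conv (adL (k := k) x) (adL (k := k) y) := by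
  have key2 : conv (LinearMap.mulRight k x)
      (LinearMap.mulLeft k y ∘ₗ HopfAlgebra.antipode (R := k) (A := A)) = adL (k := k) (x * y) := by
    apply LinearMap.ext; intro a
    rw [conv_apply _ _ _ (ℛ k a), adL, conv_apply _ _ _ (ℛ k a)]
    refine Finset.sum_congr rfl fun i _ => ?_
    simp only [LinearMap.mulRight_apply, LinearMap.comp_apply, LinearMap.mulLeft_apply]
    rw [mul_assoc, ← mul_assoc x y, ← mul_assoc]
  rw [← key2, ← conv_antipode_adL, ← conv_assoc]
  rfl

lemma adAct_mul (a x y : A) {ι : Type*} (r : Coalgebra.Repr k a ι) :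
    adAct k A (a ⊗ₜ[k] (x * y)) = ∑ i ∈ r.index,
      adAct k A (r.left i ⊗ₜ[k] x) * adAct k A (r.right i ⊗ₜ[k] y) := by
  rw [adAct_tmul_eq_adL, adL_mul, conv_apply _ _ _ r]
  exact Finset.sum_congr rfl fun i _ => by rw [adAct_tmul_eq_adL, adAct_tmul_eq_adL]

/-- Repr of a product, from the bialgebra axiom. -/
noncomputable def reprMul {x y : A} {ιx ιy : Type*} (rx : Coalgebra.Repr k x ιx) (ry : Coalgebra.Repr k y ιy) :
    Coalgebra.Repr k (x * y) (ιx × ιy) where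
  index := rx.index ×ˢ ry.index
  left := fun p => rx.left p.1 * ry.left p.2
  right := fun p => rx.right p.1 * ry.right p.2
  eq := by
    rw [Bialgebra.comul_mul, ← rx.eq, ← ry.eq, Finset.sum_mul_sum, Finset.sum_product]
    exact Finset.sum_congr rfl fun i _ => Finset.sum_congr rfl fun j _ => by
      rw [Algebra.TensorProduct.tmul_mul_tmul]

/-- Repr of the antipode of an element, using `comul_antipode`. -/
noncomputable def reprAntipode {b : B} {ιb : Type*} (rb : Coalgebra.Repr k b ιb) :
    Coalgebra.Repr k (HopfAlgebra.antipode (R := k) b) ιb where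
  index := rb.index
  left := fun i => HopfAlgebra.antipode (R := k) (rb.right i)
  right := fun i => HopfAlgebra.antipode (R := k) (rb.left i)
  eq := by
    have := congrArg (fun f : B →ₗ[k] B ⊗[k] B => f b) (comul_antipode (K := k) (H := B))
    simp only [LinearMap.comp_apply, LinearEquiv.coe_coe] at this
    rw [this, ← rb.eq, map_sum, map_sum]
    exact Finset.sum_congr rfl fun i _ => by simp

lemma sum_rotate {α β γ M : Type*} [AddCommMonoid M] (s : Finset α) (t : Finset β)
    (u : Finset γ) (f : α → β → γ → M) :
    ∑ i ∈ s, ∑ j ∈ t, ∑ l ∈ u, f i j l = ∑ l ∈ u, ∑ i ∈ s, ∑ j ∈ t, f i j l := by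
  symm
  rw [Finset.sum_comm]
  exact Finset.sum_congr rfl fun i _ => Finset.sum_comm

section Pairing
variable (φ : A ⊗[k] B →ₗ[k] k)
variable (hφ2 : φ ∘ₗ (LinearMap.rTensor B (LinearMap.mul' k A)) =
      (LinearMap.mul' k k) ∘ₗ (TensorProduct.map φ φ) ∘ₗ
        (TensorProduct.tensorTensorTensorComm k A A B B).toLinearMap ∘ₗ
        (LinearMap.lTensor (A ⊗[k] A) (Coalgebra.comul (R := k) (A := B))) ∘ₗ
        (LinearMap.rTensor B (TensorProduct.comm k A A).toLinearMap))

set_option synthInstance.maxHeartbeats 400000 in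
include hφ2 in
lemma pairing_mul_left (u v : A) (c : B) {ι : Type*} (rc : Coalgebra.Repr k c ι) :
    φ ((u * v) ⊗ₜ[k] c) = ∑ l ∈ rc.index, φ (v ⊗ₜ[k] rc.left l) * φ (u ⊗ₜ[k] rc.right l) := by
  have := congrArg (fun f : (A ⊗[k] A) ⊗[k] B →ₗ[k] k => f ((u ⊗ₜ[k] v) ⊗ₜ[k] c)) hφ2
  simp only [LinearMap.comp_apply, LinearMap.rTensor_tmul, LinearMap.mul'_apply,
    LinearEquiv.coe_coe, comm_tmul, LinearMap.lTensor_tmul] at this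
  rw [this, ← rc.eq, tmul_sum]
  simp only [map_sum, LinearEquiv.coe_coe, tensorTensorTensorComm_tmul, map_tmul,
    LinearMap.mul'_apply]

include hφ2 in
lemma coAct_mul (b : B) (x y : A) {ι : Type*} (rb : Coalgebra.Repr k b ι) :
    coAct k A B φ (b ⊗ₜ[k] (x * y)) = ∑ l ∈ rb.index,
      coAct k A B φ (rb.left l ⊗ₜ[k] x) * coAct k A B φ (rb.right l ⊗ₜ[k] y) := by
  set rx : Coalgebra.Repr k x (A × A) := ℛ k x
  set ry : Coalgebra.Repr k y (A × A) := ℛ k y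
  rw [coAct_tmul k A B φ b (x * y) (reprMul rx ry)]
  have lhs : ∑ p ∈ (reprMul rx ry).index,
      φ ((reprMul rx ry).left p ⊗ₜ[k] HopfAlgebra.antipode (R := k) b) •
        (reprMul rx ry).right p
      = ∑ i ∈ rx.index, ∑ j ∈ ry.index, ∑ l ∈ rb.index,
        (φ (ry.left j ⊗ₜ[k] HopfAlgebra.antipode (R := k) (rb.right l)) *
         φ (rx.left i ⊗ₜ[k] HopfAlgebra.antipode (R := k) (rb.left l))) •
          (rx.right i * ry.right j) := by
    calc ∑ p ∈ (reprMul rx ry).index,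
        φ ((reprMul rx ry).left p ⊗ₜ[k] HopfAlgebra.antipode (R := k) b) •
          (reprMul rx ry).right p
        = ∑ p ∈ rx.index ×ˢ ry.index,
            φ ((rx.left p.1 * ry.left p.2) ⊗ₜ[k] HopfAlgebra.antipode (R := k) b) •
              (rx.right p.1 * ry.right p.2) := rfl
      _ = ∑ i ∈ rx.index, ∑ j ∈ ry.index,
            φ ((rx.left i * ry.left j) ⊗ₜ[k] HopfAlgebra.antipode (R := k) b) •
              (rx.right i * ry.right j) := by rw [Finset.sum_product]
      _ = _ := by
          refine Finset.sum_congr rfl fun i _ => Finset.sum_congr rfl fun j _ => ?_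
          rw [pairing_mul_left φ hφ2 _ _ _ (reprAntipode rb), Finset.sum_smul]
          rfl
  rw [lhs]
  have rhs : ∀ l, coAct k A B φ (rb.left l ⊗ₜ[k] x) * coAct k A B φ (rb.right l ⊗ₜ[k] y)
      = ∑ i ∈ rx.index, ∑ j ∈ ry.index,
        (φ (ry.left j ⊗ₜ[k] HopfAlgebra.antipode (R := k) (rb.right l)) *
         φ (rx.left i ⊗ₜ[k] HopfAlgebra.antipode (R := k) (rb.left l))) •
          (rx.right i * ry.right j) := by
    intro l
    rw [coAct_tmul k A B φ _ x rx, coAct_tmul k A B φ _ y ry, Finset.sum_mul]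
    refine Finset.sum_congr rfl fun i _ => ?_
    rw [Finset.mul_sum]
    refine Finset.sum_congr rfl fun j _ => ?_
    rw [smul_mul_smul_comm, mul_comm]
  simp_rw [rhs]
  exact sum_rotate _ _ _ _

end Pairing

variable (k A)

/-- The trivial representation of `comul 1`. -/
noncomputable def reprOne : Coalgebra.Repr k (1 : A) Unit where
  index := {()}
  left := fun _ => 1
  right := fun _ => 1
  eq := by
    rw [Finset.sum_singleton, Bialgebra.comul_one, Algebra.TensorProduct.one_def]

variable {k A}

lemma adAct_one (a : A) : adAct k A (a ⊗ₜ[k] (1 : A)) = Coalgebra.counit (R := k) a • 1 := by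
  rw [adAct_tmul k A a 1 (ℛ k a)]
  simp_rw [one_mul]
  exact HopfAlgebra.sum_mul_antipode_eq_smul (ℛ k a)

lemma coAct_one (φ : A ⊗[k] B →ₗ[k] k)
    (hφ4 : ∀ b : B, φ ((1 : A) ⊗ₜ b) = Coalgebra.counit (R := k) b) (b : B) :
    coAct k A B φ (b ⊗ₜ[k] (1 : A)) = Coalgebra.counit (R := k) b • 1 := by
  rw [coAct_tmul k A B φ b 1 (reprOne k A)]
  show ∑ _i ∈ ({()} : Finset Unit), φ ((1 : A) ⊗ₜ[k] HopfAlgebra.antipode (R := k) b) • (1 : A) = _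
  rw [Finset.sum_singleton, hφ4]
  have := congrArg (fun f : B →ₗ[k] k => f b) (counit_antipode (K := k) (H := B))
  simp only [LinearMap.comp_apply] at this
  rw [this]

lemma schrodinger_tmul (φ : A ⊗[k] B →ₗ[k] k) (a : A) (b : B) (x : A) :
    schrodinger k A B φ ((a ⊗ₜ[k] b) ⊗ₜ[k] x) = adAct k A (a ⊗ₜ[k] coAct k A B φ (b ⊗ₜ[k] x)) := by
  simp only [schrodinger, LinearMap.comp_apply, LinearEquiv.coe_coe, assoc_tmul,
    LinearMap.lTensor_tmul]

lemma comulD_tmul (a : A) (b : B) :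
    comulD k A B (a ⊗ₜ[k] b) = ∑ i ∈ (ℛ k a).index, ∑ l ∈ (ℛ k b).index,
      ((ℛ k a).left i ⊗ₜ[k] (ℛ k b).left l) ⊗ₜ[k] ((ℛ k a).right i ⊗ₜ[k] (ℛ k b).right l) := by
  simp only [comulD, LinearMap.comp_apply, map_tmul, ← (ℛ k a).eq, ← (ℛ k b).eq,
    sum_tmul, tmul_sum, map_sum, LinearEquiv.coe_coe, tensorTensorTensorComm_tmul]
  exact Finset.sum_comm

lemma counitD_tmul (a : A) (b : B) :
    counitD k A B (a ⊗ₜ[k] b) =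
      Coalgebra.counit (R := k) a * Coalgebra.counit (R := k) b := by
  simp only [counitD, LinearMap.comp_apply, map_tmul, LinearEquiv.coe_coe, lid_tmul,
    smul_eq_mul]

section Main
variable (φ : A ⊗[k] B →ₗ[k] k)
variable (hφ2 : φ ∘ₗ (LinearMap.rTensor B (LinearMap.mul' k A)) =
      (LinearMap.mul' k k) ∘ₗ (TensorProduct.map φ φ) ∘ₗ
        (TensorProduct.tensorTensorTensorComm k A A B B).toLinearMap ∘ₗ
        (LinearMap.lTensor (A ⊗[k] A) (Coalgebra.comul (R := k) (A := B))) ∘ₗ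
        (LinearMap.rTensor B (TensorProduct.comm k A A).toLinearMap))

include hφ2 in
lemma main_pointwise (a : A) (b : B) (x y : A) :
    schrodinger k A B φ ((a ⊗ₜ[k] b) ⊗ₜ[k] (x * y)) =
      ∑ i ∈ (ℛ k a).index, ∑ l ∈ (ℛ k b).index,
        schrodinger k A B φ (((ℛ k a).left i ⊗ₜ[k] (ℛ k b).left l) ⊗ₜ[k] x) *
        schrodinger k A B φ (((ℛ k a).right i ⊗ₜ[k] (ℛ k b).right l) ⊗ₜ[k] y) := by
  rw [schrodinger_tmul, coAct_mul φ hφ2 b x y (ℛ k b)]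
  rw [tmul_sum, map_sum]
  calc ∑ l ∈ (ℛ k b).index, adAct k A (a ⊗ₜ[k]
        (coAct k A B φ ((ℛ k b).left l ⊗ₜ[k] x) * coAct k A B φ ((ℛ k b).right l ⊗ₜ[k] y)))
      = ∑ l ∈ (ℛ k b).index, ∑ i ∈ (ℛ k a).index,
          adAct k A ((ℛ k a).left i ⊗ₜ[k] coAct k A B φ ((ℛ k b).left l ⊗ₜ[k] x)) *
          adAct k A ((ℛ k a).right i ⊗ₜ[k] coAct k A B φ ((ℛ k b).right l ⊗ₜ[k] y)) := by
        exact Finset.sum_congr rfl fun l _ => adAct_mul a _ _ (ℛ k a)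
    _ = _ := by
        rw [Finset.sum_comm]
        exact Finset.sum_congr rfl fun i _ => Finset.sum_congr rfl fun l _ => by
          rw [schrodinger_tmul, schrodinger_tmul]

set_option synthInstance.maxHeartbeats 1600000 in
include hφ2 in
theorem main₁ :
    (schrodinger k A B φ) ∘ₗ (LinearMap.lTensor (A ⊗[k] B) (LinearMap.mul' k A)) =
      (LinearMap.mul' k A) ∘ₗ
        (TensorProduct.map (schrodinger k A B φ) (schrodinger k A B φ)) ∘ₗ
        (TensorProduct.tensorTensorTensorComm k (A ⊗[k] B) (A ⊗[k] B) A A).toLinearMap ∘ₗ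
        (LinearMap.rTensor (A ⊗[k] A) (comulD k A B)) := by
  ext a b x y
  simp only [LinearMap.comp_apply, LinearMap.lTensor_tmul, LinearMap.mul'_apply,
    LinearMap.compr₂_apply, TensorProduct.mk_apply, LinearMap.rTensor_tmul,
    LinearEquiv.coe_coe, AlgebraTensorModule.curry_apply, TensorProduct.curry_apply,
    LinearMap.coe_restrictScalars]
  rw [main_pointwise φ hφ2 a b x y, comulD_tmul, sum_tmul, map_sum, map_sum, map_sum]
  refine Finset.sum_congr rfl fun i _ => ?_
  rw [sum_tmul, map_sum, map_sum, map_sum]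
  refine Finset.sum_congr rfl fun l _ => ?_
  simp only [tensorTensorTensorComm_tmul, map_tmul, LinearMap.mul'_apply]

theorem main₂
    (hφ4 : ∀ b : B, φ ((1 : A) ⊗ₜ b) = Coalgebra.counit (R := k) b) (d : A ⊗[k] B) :
    schrodinger k A B φ (d ⊗ₜ[k] (1 : A)) = counitD k A B d • (1 : A) := by
  induction d using TensorProduct.induction_on with
  | zero => simp
  | tmul a b =>
    rw [schrodinger_tmul, coAct_one φ hφ4 b, tmul_smul, map_smul, adAct_one, counitD_tmul,
      smul_smul, mul_comm]
  | add u v hu hv => rw [add_tmul, map_add, hu, hv, map_add, add_smul]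

end Main


end AuxLemmas

/-- Let `A`, `B` be Hopf algebras (with bijective antipodes) and `φ` a skew Hopf pairing
between them. Then the Schrödinger representation of the quantum double `D_φ(A,B)` on
`A` makes `A` a `D_φ(A,B)`-module algebra: `d·(xy) = ∑ (d₍₁₎·x)(d₍₂₎·y)` and
`d·1 = ε(d)·1` for all `d ∈ D_φ(A,B)`, `x, y ∈ A`. -/
theorem stmt6 (φ : A ⊗[k] B →ₗ[k] k)
    (hSA : Function.Bijective (HopfAlgebra.antipode (R := k) (A := A)))
    (hSB : Function.Bijective (HopfAlgebra.antipode (R := k) (A := B)))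
    -- skew Hopf pairing axioms:
    (hφ1 : φ ∘ₗ (LinearMap.lTensor A (LinearMap.mul' k B)) =
      (LinearMap.mul' k k) ∘ₗ (TensorProduct.map φ φ) ∘ₗ
        (TensorProduct.tensorTensorTensorComm k A A B B).toLinearMap ∘ₗ
        (LinearMap.rTensor (B ⊗[k] B) (Coalgebra.comul (R := k) (A := A))))
    (hφ2 : φ ∘ₗ (LinearMap.rTensor B (LinearMap.mul' k A)) =
      (LinearMap.mul' k k) ∘ₗ (TensorProduct.map φ φ) ∘ₗ
        (TensorProduct.tensorTensorTensorComm k A A B B).toLinearMap ∘ₗ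
        (LinearMap.lTensor (A ⊗[k] A) (Coalgebra.comul (R := k) (A := B))) ∘ₗ
        (LinearMap.rTensor B (TensorProduct.comm k A A).toLinearMap))
    (hφ3 : ∀ a : A, φ (a ⊗ₜ (1 : B)) = Coalgebra.counit (R := k) a)
    (hφ4 : ∀ b : B, φ ((1 : A) ⊗ₜ b) = Coalgebra.counit (R := k) b) :
    -- `A` is a `D_φ(A,B)`-module algebra:
    (schrodinger k A B φ) ∘ₗ (LinearMap.lTensor (A ⊗[k] B) (LinearMap.mul' k A)) =
        (LinearMap.mul' k A) ∘ₗ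
          (TensorProduct.map (schrodinger k A B φ) (schrodinger k A B φ)) ∘ₗ
          (TensorProduct.tensorTensorTensorComm k (A ⊗[k] B) (A ⊗[k] B) A A).toLinearMap ∘ₗ
          (LinearMap.rTensor (A ⊗[k] A) (comulD k A B)) ∧
      ∀ d : A ⊗[k] B, (schrodinger k A B φ) (d ⊗ₜ (1 : A)) = (counitD k A B) d • (1 : A) := by
  constructor
  · exact main₁ φ hφ2
  · exact fun d => main₂ φ hφ4 d
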